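/- arXiv:2202.00429 — 5 statements merged into one kernel-verified Lean document; each statement's English description precedes it below -/
import Mathlib

section
/- Let f : ℝ^n → ℝ be convex, twice continuously differentiable, and symmetric under permutations of the coordinates. Let λ ∈ ℝ^n have pairwise distinct entries, and let B be an n×n complex Hermitian matrix. Then Σ_{a,b} (∂²f/∂λ_a∂λ_b)(λ) · Re(B_{aa}) · Re(B_{bb}) + Σ_{a≠b} ((∂f/∂λ_a(λ) − ∂f/∂λ_b(λ))/(λ_a − λ_b)) · |B_{ab}|² ≥ 0. -/
open Filter Topology

private lemma monotone_hasDerivAt_nonneg {φ : ℝ → ℝ} (hm : Monotone φ) {m t : ℝ}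
    (h : HasDerivAt φ m t) : 0 ≤ m := by
  have h' : Tendsto (slope φ t) (𝓝[Set.Ioi t \ {t}] t) (𝓝 m) :=
    hasDerivWithinAt_iff_tendsto_slope.1 (h.hasDerivWithinAt (s := Set.Ioi t))
  have hss : Set.Ioi t \ {t} = Set.Ioi t := Set.diff_singleton_eq_self (by simp)
  rw [hss] at h'
  refine ge_of_tendsto h' ?_
  filter_upwards [self_mem_nhdsWithin] with y (hy : t < y)
  rw [slope_def_field]
  exact div_nonneg (sub_nonneg.2 (hm hy.le)) (sub_nonneg.2 hy.le)

private lemma line_hasDerivAt {E : Type*} [NormedAddCommGroup E] [NormedSpace ℝ E]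
    {g : E → ℝ} {x d : E} {t : ℝ} (hg : DifferentiableAt ℝ g (x + t • d)) :
    HasDerivAt (fun s : ℝ => g (x + s • d)) (fderiv ℝ g (x + t • d) d) t := by
  have hc : HasDerivAt (fun s : ℝ => x + s • d) d t := by
    simpa using ((hasDerivAt_id t).smul_const d).const_add x
  exact hg.hasFDerivAt.comp_hasDerivAt t hc

private lemma line_convex {E : Type*} [NormedAddCommGroup E] [NormedSpace ℝ E]
    {f : E → ℝ} (hconv : ConvexOn ℝ Set.univ f) (x d : E) :
    ConvexOn ℝ Set.univ (fun t : ℝ => f (x + t • d)) := by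
  have h := hconv.comp_affineMap (AffineMap.lineMap x (x + d) : ℝ →ᵃ[ℝ] E)
  have he : (fun t : ℝ => f (x + t • d)) =
      f ∘ (AffineMap.lineMap x (x + d) : ℝ →ᵃ[ℝ] E) := by
    funext t
    simp [AffineMap.lineMap_apply, add_comm]
  rw [he]
  simpa using h

private lemma line_deriv_monotone {E : Type*} [NormedAddCommGroup E] [NormedSpace ℝ E]
    {f : E → ℝ} (hconv : ConvexOn ℝ Set.univ f) (hdf : Differentiable ℝ f) (x d : E) :
    Monotone (fun t : ℝ => fderiv ℝ f (x + t • d) d) := by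
  have hmono : MonotoneOn (deriv fun t : ℝ => f (x + t • d)) Set.univ :=
    (line_convex hconv x d).monotoneOn_deriv
      (fun t _ => (line_hasDerivAt (hdf _)).differentiableAt)
  have he : (deriv fun t : ℝ => f (x + t • d)) =
      fun t : ℝ => fderiv ℝ f (x + t • d) d := by
    funext t
    exact (line_hasDerivAt (hdf _)).deriv
  rw [he] at hmono
  exact monotoneOn_univ.1 hmono

private lemma dir2_nonneg {n : ℕ} {f : (Fin n → ℝ) → ℝ}
    (hconv : ConvexOn ℝ Set.univ f) (hreg : ContDiff ℝ 2 f) (x d : Fin n → ℝ) :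
    0 ≤ fderiv ℝ (fun y => fderiv ℝ f y d) x d := by
  have hdf : Differentiable ℝ f := hreg.differentiable two_ne_zero
  have hdf1 : Differentiable ℝ (fderiv ℝ f) :=
    (hreg.fderiv_right (m := 1) (by norm_num)).differentiable one_ne_zero
  have hψd : DifferentiableAt ℝ (fun y => fderiv ℝ f y d) x :=
    (hdf1 x).clm_apply (differentiableAt_const d)
  have hmono := line_deriv_monotone hconv hdf x d
  have h0 : HasDerivAt (fun t : ℝ => fderiv ℝ f (x + t • d) d)
      (fderiv ℝ (fun y => fderiv ℝ f y d) x d) 0 := by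
    have := line_hasDerivAt (g := fun y => fderiv ℝ f y d) (x := x) (d := d) (t := 0)
      (by simpa using hψd)
    simpa using this
  exact monotone_hasDerivAt_nonneg hmono h0

/-- The Lewis–Sendov Hessian quadratic form of a convex, C², permutation-symmetric
function `f : ℝⁿ → ℝ`, evaluated at a point with pairwise distinct entries against a
Hermitian matrix `B`, is nonnegative. -/
theorem spectral_hessian_nonneg (n : ℕ) (f : (Fin n → ℝ) → ℝ)
    (hconv : ConvexOn ℝ Set.univ f)
    (hreg : ContDiff ℝ 2 f)
    (hsymm : ∀ (σ : Equiv.Perm (Fin n)) (x : Fin n → ℝ), f (x ∘ σ) = f x)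
    (lam : Fin n → ℝ) (hlam : Function.Injective lam)
    (B : Matrix (Fin n) (Fin n) ℂ) (hB : B.IsHermitian) :
    0 ≤ (∑ a, ∑ b, fderiv ℝ (fun x => fderiv ℝ f x (Pi.single b 1)) lam (Pi.single a 1)
            * (B a a).re * (B b b).re)
      + ∑ a, ∑ b, (if a ≠ b then
          ((fderiv ℝ f lam (Pi.single a 1) - fderiv ℝ f lam (Pi.single b 1)) / (lam a - lam b))
            * ‖B a b‖ ^ 2 else 0) := by
  have hdf : Differentiable ℝ f := hreg.differentiable two_ne_zero
  have hdf1 : Differentiable ℝ (fderiv ℝ f) :=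
    (hreg.fderiv_right (m := 1) (by norm_num)).differentiable one_ne_zero
  -- key: second fderiv application
  have key : ∀ v w : Fin n → ℝ,
      fderiv ℝ (fun y => fderiv ℝ f y w) lam v = fderiv ℝ (fderiv ℝ f) lam v w := by
    intro v w
    have h := fderiv_clm_apply (hdf1 lam) (differentiableAt_const w)
    rw [h]
    simp
  set G := fderiv ℝ (fderiv ℝ f) lam with hG
  set e : Fin n → ℝ := fun a => (B a a).re with he
  have hd : (∑ a, e a • (Pi.single a 1 : Fin n → ℝ)) = e := by
    funext j
    simp [Pi.single_apply, Finset.sum_apply]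
  -- First sum equals second directional derivative along e
  have h1 : (∑ a, ∑ b, fderiv ℝ (fun x => fderiv ℝ f x (Pi.single b 1)) lam (Pi.single a 1)
          * (B a a).re * (B b b).re)
      = fderiv ℝ (fun y => fderiv ℝ f y e) lam e := by
    rw [key e e, ← hd]
    simp only [map_sum, map_smul, ContinuousLinearMap.coe_sum', ContinuousLinearMap.coe_smul',
      Finset.sum_apply, Pi.smul_apply, smul_eq_mul]
    rw [Finset.sum_comm]
    refine Finset.sum_congr rfl fun a _ => ?_
    rw [Finset.mul_sum]
    refine Finset.sum_congr rfl fun b _ => ?_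
    rw [key]
    ring
  have h1nonneg : 0 ≤ (∑ a, ∑ b, fderiv ℝ (fun x => fderiv ℝ f x (Pi.single b 1)) lam
      (Pi.single a 1) * (B a a).re * (B b b).re) := by
    rw [h1]; exact dir2_nonneg hconv hreg lam e
  -- Second sum: each coefficient nonneg
  have h2 : ∀ a b : Fin n, a ≠ b →
      0 ≤ (fderiv ℝ f lam (Pi.single a 1) - fderiv ℝ f lam (Pi.single b 1)) / (lam a - lam b) := by
    intro a b hab
    set s : Equiv.Perm (Fin n) := Equiv.swap a b with hs
    set Pl : (Fin n → ℝ) →ₗ[ℝ] (Fin n → ℝ) :=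
      { toFun := fun x => x ∘ s, map_add' := fun _ _ => rfl, map_smul' := fun _ _ => rfl } with hPl
    set P : (Fin n → ℝ) →L[ℝ] (Fin n → ℝ) := Pl.toContinuousLinearMap with hP
    have hPapp : ∀ x : Fin n → ℝ, P x = x ∘ s := fun _ => rfl
    have hfP : f ∘ P = f := by
      funext x
      exact hsymm s x
    -- chain rule: fderiv f lam v = fderiv f (P lam) (P v)
    have hchain : ∀ v : Fin n → ℝ, fderiv ℝ f lam v = fderiv ℝ f (P lam) (P v) := by
      intro v
      have h := fderiv_comp lam (hdf (P lam)) P.differentiableAt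
      rw [P.fderiv] at h
      have : fderiv ℝ f lam = (fderiv ℝ f (P lam)).comp P := by
        rw [← h]
        congr 1
        exact hfP.symm
      rw [this]
      rfl
    set u : Fin n → ℝ := (lam ∘ s) - lam with hu
    have hPlam : P lam = lam ∘ s := rfl
    have hPu : P u = -u := by
      funext j
      have : (u ∘ s) j = -u j := by
        rcases eq_or_ne j a with rfl | hja
        · simp [hu, hs, Equiv.swap_apply_left, Equiv.swap_apply_right]
        rcases eq_or_ne j b with rfl | hjb
        · simp [hu, hs, Equiv.swap_apply_left, Equiv.swap_apply_right]
        · simp [hu, hs, Equiv.swap_apply_of_ne_of_ne hja hjb]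
      simpa [hPapp] using this
    -- gradient monotone along line
    have hmono := line_deriv_monotone hconv hdf lam u
    have h01 : fderiv ℝ f (lam + (0:ℝ) • u) u ≤ fderiv ℝ f (lam + (1:ℝ) • u) u :=
      hmono zero_le_one
    have hl0 : lam + (0:ℝ) • u = lam := by simp
    have hl1 : lam + (1:ℝ) • u = lam ∘ s := by
      funext j; simp [hu]
    rw [hl0, hl1] at h01
    -- fderiv f (lam ∘ s) u = - fderiv f lam u
    have hflip : fderiv ℝ f (lam ∘ s) u = - fderiv ℝ f lam u := by
      have h := hchain (-u)
      rw [hPlam] at h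
      have hPnu : P (-u) = u := by rw [map_neg, hPu, neg_neg]
      rw [hPnu, map_neg] at h
      linarith
    have hle0 : fderiv ℝ f lam u ≤ 0 := by linarith
    -- expand u
    have huexp : u = (lam b - lam a) • (Pi.single a 1 : Fin n → ℝ)
        + (lam a - lam b) • (Pi.single b 1 : Fin n → ℝ) := by
      funext j
      rcases eq_or_ne j a with rfl | hja
      · simp [hu, hs, Equiv.swap_apply_left, Pi.single_apply, hab.symm]
      rcases eq_or_ne j b with rfl | hjb
      · simp [hu, hs, Equiv.swap_apply_right, Pi.single_apply, hab]
      · simp [hu, hs, Equiv.swap_apply_of_ne_of_ne hja hjb, Pi.single_apply, hja, hjb]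
    have hval : fderiv ℝ f lam u = (lam b - lam a) * fderiv ℝ f lam (Pi.single a 1)
        + (lam a - lam b) * fderiv ℝ f lam (Pi.single b 1) := by
      rw [huexp]; simp
    have hkey : 0 ≤ (fderiv ℝ f lam (Pi.single a 1) - fderiv ℝ f lam (Pi.single b 1))
        * (lam a - lam b) := by nlinarith [hle0, hval]
    have hne : lam a - lam b ≠ 0 := sub_ne_zero.2 (fun h => hab (hlam h))
    have : (fderiv ℝ f lam (Pi.single a 1) - fderiv ℝ f lam (Pi.single b 1)) / (lam a - lam b)
        = ((fderiv ℝ f lam (Pi.single a 1) - fderiv ℝ f lam (Pi.single b 1))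
            * (lam a - lam b)) / ((lam a - lam b) ^ 2) := by
      field_simp
    rw [this]
    exact div_nonneg hkey (sq_nonneg _)
  have h2nonneg : 0 ≤ ∑ a, ∑ b, (if a ≠ b then
      ((fderiv ℝ f lam (Pi.single a 1) - fderiv ℝ f lam (Pi.single b 1)) / (lam a - lam b))
        * ‖B a b‖ ^ 2 else 0) := by
    refine Finset.sum_nonneg fun a _ => Finset.sum_nonneg fun b _ => ?_
    split_ifs with hab
    · exact mul_nonneg (h2 a b hab) (by positivity)
    · exact le_refl _
  linarith
end

section
/- Let k : ℝ → ℝ be differentiable, convex and non-decreasing on (0,∞). Let λ_a, λ_b > 0 with λ_a ≠ λ_b, let ξ_a, ξ_b ∈ ℂ, and set S = (k'(λ_a) − k'(λ_b))/(λ_a − λ_b). Then (λ_b·S + k'(λ_a)) · ((λ_a+λ_b)/2 · |ξ_a|²|ξ_b|² + √(λ_a λ_b) · Re(ξ_a² · conj(ξ_b)²)) + (λ_a·S + k'(λ_b)) · ((λ_a+λ_b)/2 · |ξ_a|²|ξ_b|² + √(λ_a λ_b) · Re(ξ_b² · conj(ξ_a)²)) ≥ ((λ_a+λ_b)·S + k'(λ_a)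 + k'(λ_b)) · ((λ_a+λ_b)/2 − √(λ_a λ_b)) · |ξ_a|²|ξ_b|² ≥ 0. -/
/-- The pairwise estimate from the ellipticity proof of the linearized real moment map
equation, for a differentiable, convex, non-decreasing function `k` on `(0,∞)`. -/
theorem pairwise_symbol_estimate (k k' : ℝ → ℝ)
    (hderiv : ∀ x ∈ Set.Ioi (0:ℝ), HasDerivAt k (k' x) x)
    (hconv : ConvexOn ℝ (Set.Ioi 0) k)
    (hmono : MonotoneOn k (Set.Ioi 0))
    (la lb : ℝ) (hla : 0 < la) (hlb : 0 < lb) (hne : la ≠ lb)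
    (xa xb : ℂ) :
    let S : ℝ := (k' la - k' lb) / (la - lb)
    ((lb * S + k' la) * ((la + lb) / 2 * (‖xa‖ ^ 2 * ‖xb‖ ^ 2)
          + Real.sqrt (la * lb) * (xa ^ 2 * (starRingEnd ℂ xb) ^ 2).re)
        + (la * S + k' lb) * ((la + lb) / 2 * (‖xa‖ ^ 2 * ‖xb‖ ^ 2)
          + Real.sqrt (la * lb) * (xb ^ 2 * (starRingEnd ℂ xa) ^ 2).re)
      ≥ ((la + lb) * S + k' la + k' lb) * ((la + lb) / 2 - Real.sqrt (la * lb))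
          * (‖xa‖ ^ 2 * ‖xb‖ ^ 2))
    ∧ ((la + lb) * S + k' la + k' lb) * ((la + lb) / 2 - Real.sqrt (la * lb))
          * (‖xa‖ ^ 2 * ‖xb‖ ^ 2) ≥ 0 := by
  intro S
  -- k' is nonnegative on (0,∞)
  have hk'nonneg : ∀ y ∈ Set.Ioi (0:ℝ), 0 ≤ k' y := by
    intro y hy
    have hy0 : (0:ℝ) < y := hy
    have hx : y/2 ∈ Set.Ioi (0:ℝ) := by simpa using half_pos hy0
    have hxy : y/2 < y := half_lt_self hy0
    have h1 : slope k (y/2) y ≤ k' y :=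
      hconv.slope_le_of_hasDerivAt hx hy hxy (hderiv y hy)
    have h2 : 0 ≤ slope k (y/2) y := by
      rw [slope_def_field]
      apply div_nonneg
      · linarith [hmono hx hy hxy.le]
      · linarith
    linarith
  -- the secant slope of k' is nonnegative
  have hS : 0 ≤ S := by
    have key : ∀ x y : ℝ, 0 < x → 0 < y → x < y →
        0 ≤ (k' y - k' x) / (y - x) := by
      intro x y hx hy hxy
      have h1 : k' x ≤ slope k x y :=
        hconv.le_slope_of_hasDerivAt hx hy hxy (hderiv x hx)
      have h2 : slope k x y ≤ k' y :=
        hconv.slope_le_of_hasDerivAt hx hy hxy (hderiv y hy)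
      apply div_nonneg (by linarith) (by linarith)
    rcases lt_or_gt_of_ne hne with h | h
    · have := key la lb hla hlb h
      show 0 ≤ (k' la - k' lb) / (la - lb)
      rw [div_nonneg_iff] at this ⊢
      rcases this with ⟨h1, h2⟩ | ⟨h1, h2⟩
      · right; constructor <;> linarith
      · left; constructor <;> linarith
    · exact key lb la hlb hla h
  set P : ℝ := ‖xa‖ ^ 2 * ‖xb‖ ^ 2 with hP
  have hPnonneg : 0 ≤ P := by positivity
  set s : ℝ := Real.sqrt (la * lb) with hs
  have hsnonneg : 0 ≤ s := Real.sqrt_nonneg _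
  have hsle : s ≤ (la + lb) / 2 := by
    rw [hs, show (la + lb) / 2 = Real.sqrt (((la + lb) / 2) ^ 2) by
      rw [Real.sqrt_sq (by positivity)]]
    apply Real.sqrt_le_sqrt
    nlinarith [sq_nonneg (la - lb)]
  -- bounds on the real parts
  have hre : ∀ z w : ℂ, -(‖z‖ ^ 2 * ‖w‖ ^ 2)
      ≤ (z ^ 2 * (starRingEnd ℂ w) ^ 2).re := by
    intro z w
    have h1 : |(z ^ 2 * (starRingEnd ℂ w) ^ 2).re| ≤ ‖z ^ 2 * (starRingEnd ℂ w) ^ 2‖ :=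
      Complex.abs_re_le_norm _
    have h2 : ‖z ^ 2 * (starRingEnd ℂ w) ^ 2‖
        = ‖z‖ ^ 2 * ‖w‖ ^ 2 := by
      rw [norm_mul, norm_pow, norm_pow, Complex.norm_conj]
    rw [h2] at h1
    linarith [neg_abs_le ((z ^ 2 * (starRingEnd ℂ w) ^ 2).re)]
  have hr1 := hre xa xb
  have hr2 := hre xb xa
  have hc1 : 0 ≤ lb * S + k' la := by
    have := hk'nonneg la hla
    have := mul_nonneg hlb.le hS
    linarith
  have hc2 : 0 ≤ la * S + k' lb := by
    have := hk'nonneg lb hlb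
    have := mul_nonneg hla.le hS
    linarith
  constructor
  · have e1 : 0 ≤ (lb * S + k' la) * (s * (P + (xa ^ 2 * (starRingEnd ℂ xb) ^ 2).re)) := by
      apply mul_nonneg hc1 (mul_nonneg hsnonneg (by linarith))
    have e2 : 0 ≤ (la * S + k' lb) * (s * (P + (xb ^ 2 * (starRingEnd ℂ xa) ^ 2).re)) := by
      apply mul_nonneg hc2 (mul_nonneg hsnonneg (by linarith))
    nlinarith [e1, e2]
  · apply mul_nonneg (mul_nonneg (by linarith) (by linarith)) hPnonneg
end

section
/- Let k : ℝ → ℝ be twice differentiable, convex and non-decreasing on (0,∞) (so k' ≥ 0 and k'' ≥ 0 on (0,∞)). Let λ_1,…,λ_n > 0 be pairwise distinct and ξ_1,…,ξ_n ∈ ℂ. Then Σ_a 2λ_a(λ_a·k''(λ_a) + k'(λ_a))·|ξ_a|⁴ + Σ_{a≠b} (λ_b·(k'(λ_a) − k'(λ_b))/(λ_a − λ_b) + k'(λ_a)) · ((λ_a+λ_b)/2 · |ξ_a|²|ξ_b|² + √(λ_a λ_b) · Re(ξ_a² · conj(ξ_b)²)) ≥ 0. -/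
/-- Nonnegativity of the Higgs-field correction to the principal symbol of the
linearized real moment map equation, for a twice differentiable, convex,
non-decreasing function `k` on `(0,∞)`. -/
theorem symbol_correction_nonneg (k k' k'' : ℝ → ℝ)
    (hd1 : ∀ x ∈ Set.Ioi (0:ℝ), HasDerivAt k (k' x) x)
    (hd2 : ∀ x ∈ Set.Ioi (0:ℝ), HasDerivAt k' (k'' x) x)
    (hconv : ConvexOn ℝ (Set.Ioi 0) k)
    (hmono : MonotoneOn k (Set.Ioi 0))
    (hk'nonneg : ∀ x ∈ Set.Ioi (0:ℝ), 0 ≤ k' x)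
    (hk''nonneg : ∀ x ∈ Set.Ioi (0:ℝ), 0 ≤ k'' x)
    (n : ℕ) (lam : Fin n → ℝ) (hpos : ∀ a, 0 < lam a)
    (hinj : Function.Injective lam)
    (xi : Fin n → ℂ) :
    0 ≤ (∑ a, 2 * lam a * (lam a * k'' (lam a) + k' (lam a)) * ‖xi a‖ ^ 4)
      + ∑ a, ∑ b, (if a ≠ b then
          (lam b * ((k' (lam a) - k' (lam b)) / (lam a - lam b)) + k' (lam a))
            * ((lam a + lam b) / 2 * (‖xi a‖ ^ 2 * ‖xi b‖ ^ 2)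
              + Real.sqrt (lam a * lam b) * ((xi a) ^ 2 * (starRingEnd ℂ (xi b)) ^ 2).re)
        else 0) := by
  have hk'mono : MonotoneOn k' (Set.Ioi 0) := by
    apply monotoneOn_of_deriv_nonneg (convex_Ioi 0)
    · exact fun x hx => (hd2 x hx).continuousAt.continuousWithinAt
    · intro x hx
      rw [interior_Ioi] at hx
      exact ((hd2 x hx).differentiableAt.differentiableWithinAt)
    · intro x hx
      rw [interior_Ioi] at hx
      rw [(hd2 x hx).deriv]
      exact hk''nonneg x hx
  apply add_nonneg
  · apply Finset.sum_nonneg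
    intro a _
    have ha := hpos a
    have h1 := hk'nonneg (lam a) ha
    have h2 := hk''nonneg (lam a) ha
    positivity
  · apply Finset.sum_nonneg
    intro a _
    apply Finset.sum_nonneg
    intro b _
    split_ifs with hab
    · have ha := hpos a
      have hb := hpos b
      have hne : lam a ≠ lam b := fun h => hab (hinj h)
      have h1 := hk'nonneg (lam a) ha
      -- the difference quotient is nonneg
      have hD : 0 ≤ (k' (lam a) - k' (lam b)) / (lam a - lam b) := by
        rcases lt_or_gt_of_ne hne with h | h
        · rw [div_nonneg_iff]
          right
          constructor
          · have := hk'mono ha hb h.le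
            linarith
          · linarith
        · apply div_nonneg
          · simpa using sub_nonneg.2 (hk'mono hb ha h.le)
          · linarith
      have hc : 0 ≤ lam b * ((k' (lam a) - k' (lam b)) / (lam a - lam b)) + k' (lam a) := by
        have := mul_nonneg hb.le hD
        linarith
      apply mul_nonneg hc
      set A := ‖xi a‖ ^ 2 with hA
      set B := ‖xi b‖ ^ 2 with hB
      set R := ((xi a) ^ 2 * (starRingEnd ℂ (xi b)) ^ 2).re with hR
      have hAn : 0 ≤ A := by positivity
      have hBn : 0 ≤ B := by positivity
      have hs : 0 ≤ Real.sqrt (lam a * lam b) := Real.sqrt_nonneg _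
      have hRabs : ‖(xi a) ^ 2 * (starRingEnd ℂ (xi b)) ^ 2‖ = A * B := by
        rw [norm_mul, norm_pow, norm_pow, Complex.norm_conj]
      have hRge : -(A * B) ≤ R := by
        have := Complex.abs_re_le_norm ((xi a) ^ 2 * (starRingEnd ℂ (xi b)) ^ 2)
        rw [hRabs] at this
        have := neg_abs_le R
        cases abs_cases R with
        | inl h => nlinarith [Complex.abs_re_le_norm ((xi a) ^ 2 * (starRingEnd ℂ (xi b)) ^ 2)]
        | inr h => nlinarith [Complex.abs_re_le_norm ((xi a) ^ 2 * (starRingEnd ℂ (xi b)) ^ 2)]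
      have hsM : Real.sqrt (lam a * lam b) ≤ (lam a + lam b) / 2 := by
        rw [Real.sqrt_mul ha.le]
        nlinarith [sq_nonneg (Real.sqrt (lam a) - Real.sqrt (lam b)),
          Real.sq_sqrt ha.le, Real.sq_sqrt hb.le,
          Real.sqrt_nonneg (lam a), Real.sqrt_nonneg (lam b)]
      nlinarith [mul_nonneg (sub_nonneg.2 hsM) (mul_nonneg hAn hBn),
        mul_nonneg hs (by linarith : (0:ℝ) ≤ R + A * B)]
    · exact le_refl 0
end

section
/- Let σ and μ be finite measures on a measurable space, let A₀ > 0, λ ∈ (0,1), C ≥ 0 and t ∈ [0,1] be real numbers, let v be a nonnegative function integrable with respect to both σ and μ, and let B be a measurable function with |B| ≤ C μ-almost everywhere and B·v μ-integrable. If ∫ v dσ − A₀·∫ v dμ ≥ λ·∫ v dσ, then ∫ v dσ − ∫ (A₀ + t·B)·v dμ ≥ (λ − C·(1−λ)/A₀)·∫ v dσ. -/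
open MeasureTheory

/-- Perturbation of uniform stability: if `(σ, A₀·μ)` is uniformly stable with constant `λ`
for the nonnegative function `v`, then the perturbed density `A₀ + t·B`, with `|B| ≤ C`
μ-a.e., is uniformly stable with constant `λ − C(1−λ)/A₀`. -/
theorem uniform_stability_perturbation {α : Type*} [MeasurableSpace α]
    (σ μ : Measure α) [IsFiniteMeasure σ] [IsFiniteMeasure μ]
    (A0 : ℝ) (hA0 : 0 < A0) (lam : ℝ) (hlam : lam ∈ Set.Ioo (0:ℝ) 1)
    (C : ℝ) (hC : 0 ≤ C) (t : ℝ) (ht : t ∈ Set.Icc (0:ℝ) 1)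
    (v : α → ℝ) (hv : ∀ x, 0 ≤ v x)
    (hvσ : Integrable v σ) (hvμ : Integrable v μ)
    (B : α → ℝ) (hBmeas : Measurable B)
    (hBbound : ∀ᵐ x ∂μ, |B x| ≤ C)
    (hBv : Integrable (fun x => B x * v x) μ)
    (hstab : (∫ x, v x ∂σ) - A0 * ∫ x, v x ∂μ ≥ lam * ∫ x, v x ∂σ) :
    (∫ x, v x ∂σ) - (∫ x, (A0 + t * B x) * v x ∂μ)
      ≥ (lam - C * (1 - lam) / A0) * ∫ x, v x ∂σ := by

  obtain ⟨hl0, hl1⟩ := hlam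
  obtain ⟨ht0, ht1⟩ := ht
  have hIσ : 0 ≤ ∫ x, v x ∂σ := integral_nonneg hv
  have hIμ : 0 ≤ ∫ x, v x ∂μ := integral_nonneg hv
  have hsplit : (∫ x, (A0 + t * B x) * v x ∂μ)
      = A0 * ∫ x, v x ∂μ + t * ∫ x, B x * v x ∂μ := by
    have : (fun x => (A0 + t * B x) * v x)
        = fun x => A0 * v x + t * (B x * v x) := by
      funext x; ring
    rw [this, integral_add (hvμ.const_mul A0) (hBv.const_mul t),
      integral_const_mul, integral_const_mul]
  have habs : |∫ x, B x * v x ∂μ| ≤ C * ∫ x, v x ∂μ := by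
    calc |∫ x, B x * v x ∂μ| ≤ ∫ x, |B x * v x| ∂μ := by
          have h := norm_integral_le_integral_norm (fun x => B x * v x) (μ := μ)
          simpa [Real.norm_eq_abs, abs_mul] using h
      _ ≤ ∫ x, C * v x ∂μ := by
          refine integral_mono_ae hBv.abs (hvμ.const_mul C) ?_
          filter_upwards [hBbound] with x hx
          rw [abs_mul, abs_of_nonneg (hv x)]
          exact mul_le_mul_of_nonneg_right hx (hv x)
      _ = C * ∫ x, v x ∂μ := integral_const_mul C _
  have hμle : A0 * ∫ x, v x ∂μ ≤ (1 - lam) * ∫ x, v x ∂σ := by linarith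
  have hμle' : ∫ x, v x ∂μ ≤ (1 - lam) / A0 * ∫ x, v x ∂σ := by
    rw [div_mul_eq_mul_div, le_div_iff₀ hA0]
    linarith
  have htB : t * ∫ x, B x * v x ∂μ ≤ C * ∫ x, v x ∂μ := by
    have h1 : ∫ x, B x * v x ∂μ ≤ C * ∫ x, v x ∂μ := by
      have := le_abs_self (∫ x, B x * v x ∂μ); linarith
    nlinarith [mul_nonneg hC hIμ]
  rw [hsplit]
  have : C * (1 - lam) / A0 * ∫ x, v x ∂σ = C * ((1 - lam) / A0 * ∫ x, v x ∂σ) := by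
    ring
  have hkey := mul_le_mul_of_nonneg_left hμle' hC
  linarith
end

section
/- Let X and Y be n×n real symmetric matrices, let A be the 2n×2n real matrix with block form A = [[X, Y],[Y, −X]], and let M = (X + iY)·(X − iY) as an n×n complex matrix. Then M is Hermitian positive semidefinite, and the characteristic polynomial of A² (regarded as a complex matrix) equals the square of the characteristic polynomial of M. -/
open Polynomial in
lemma my_charpoly_transpose {n R : Type*} [Fintype n] [DecidableEq n] [CommRing R]
    (M : Matrix n n R) : M.transpose.charpoly = M.charpoly := by
  have h : Matrix.charmatrix M.transpose = (Matrix.charmatrix M).transpose := by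
    ext i j
    by_cases h : i = j
    · subst h; simp [Matrix.charmatrix_apply_eq]
    · simp [Matrix.charmatrix_apply_ne _ _ _ h, Matrix.charmatrix_apply_ne _ _ _ (Ne.symm h),
        Matrix.transpose_apply]
  rw [Matrix.charpoly, h, Matrix.det_transpose, Matrix.charpoly]

open Polynomial in
lemma my_charpoly_conj {n R : Type*} [Fintype n] [DecidableEq n] [CommRing R]
    (P B : Matrix n n R) [Invertible P] :
    (P * B * ⅟P).charpoly = B.charpoly := by
  set f := (C : R →+* R[X])
  set Pc := f.mapMatrix P with hPc
  have : Invertible Pc := Invertible.map f.mapMatrix P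
  have hch : Matrix.charmatrix (P * B * ⅟P) = Pc * Matrix.charmatrix B * ⅟Pc := by
    unfold Matrix.charmatrix
    rw [mul_sub, sub_mul]
    have h1 : Pc * Matrix.scalar _ (X : R[X]) * ⅟Pc = Matrix.scalar _ (X : R[X]) := by
      rw [((Matrix.scalar_commute (X : R[X]) (fun r' => Commute.all _ _) Pc)).symm.eq,
        mul_assoc, mul_invOf_self, mul_one]
    have hinv : (⅟Pc : Matrix n n R[X]) = f.mapMatrix (⅟P) := by
      exact (map_invOf f.mapMatrix P).symm
    have h2 : Pc * f.mapMatrix B * ⅟Pc = f.mapMatrix (P * B * ⅟P) := by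
      rw [map_mul, map_mul, hinv]
    rw [h1, h2]
  rw [Matrix.charpoly, hch, Matrix.det_mul, Matrix.det_mul, mul_comm, ← mul_assoc,
    ← Matrix.det_mul, invOf_mul_self, Matrix.det_one, one_mul, Matrix.charpoly]

open ComplexOrder

/-- For real symmetric `X, Y`, the block matrix `A = [[X,Y],[Y,−X]]` and the complex
matrix `M = (X+iY)(X−iY)` satisfy: `M` is Hermitian positive semidefinite, and the
characteristic polynomial of `A²` (over `ℂ`) is the square of that of `M`. -/
theorem block_square_charpoly (n : ℕ) (X Y : Matrix (Fin n) (Fin n) ℝ)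
    (hX : X.transpose = X) (hY : Y.transpose = Y) :
    let A : Matrix (Fin n ⊕ Fin n) (Fin n ⊕ Fin n) ℝ := Matrix.fromBlocks X Y Y (-X)
    let M : Matrix (Fin n) (Fin n) ℂ :=
      (X.map (Complex.ofReal) + Complex.I • Y.map (Complex.ofReal)) *
        (X.map (Complex.ofReal) - Complex.I • Y.map (Complex.ofReal))
    M.PosSemidef ∧ ((A * A).map (algebraMap ℝ ℂ)).charpoly = M.charpoly ^ 2 := by
  intro A M
  set X' : Matrix (Fin n) (Fin n) ℂ := X.map (Complex.ofReal) with hX'def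
  set Y' : Matrix (Fin n) (Fin n) ℂ := Y.map (Complex.ofReal) with hY'def
  have hX' : X'.transpose = X' := by rw [hX'def, ← Matrix.transpose_map, hX]
  have hY' : Y'.transpose = Y' := by rw [hY'def, ← Matrix.transpose_map, hY]
  have h1 : X'.conjTranspose = X' := by
    ext i j
    have hx : X j i = X i j := congrFun (congrFun hX i) j
    rw [Matrix.conjTranspose_apply]
    show (starRingEnd ℂ) ((X j i : ℝ) : ℂ) = ((X i j : ℝ) : ℂ)
    rw [Complex.conj_ofReal, hx]
  have h2 : Y'.conjTranspose = Y' := by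
    ext i j
    have hy : Y j i = Y i j := congrFun (congrFun hY i) j
    rw [Matrix.conjTranspose_apply]
    show (starRingEnd ℂ) ((Y j i : ℝ) : ℂ) = ((Y i j : ℝ) : ℂ)
    rw [Complex.conj_ofReal, hy]
  set Z : Matrix (Fin n) (Fin n) ℂ := X' + Complex.I • Y' with hZdef
  have hZH : Z.conjTranspose = X' - Complex.I • Y' := by
    rw [hZdef, Matrix.conjTranspose_add, Matrix.conjTranspose_smul, h1, h2]
    simp [sub_eq_add_neg]
  constructor
  · have : M = Z * Z.conjTranspose := by rw [hZH]
    rw [this]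
    exact Matrix.posSemidef_self_mul_conjTranspose Z
  · -- charpoly part
    set S : Matrix (Fin n) (Fin n) ℂ := X' * X' + Y' * Y' with hSdef
    set C0 : Matrix (Fin n) (Fin n) ℂ := X' * Y' - Y' * X' with hC0def
    have hM : M = S - Complex.I • C0 := by
      show (X' + Complex.I • Y') * (X' - Complex.I • Y') = _
      rw [hSdef, hC0def]
      simp only [mul_sub, add_mul, Matrix.mul_smul, Matrix.smul_mul, smul_smul,
        Complex.I_mul_I, neg_one_smul, smul_sub]
      module
    have hMT : M.transpose = S + Complex.I • C0 := by
      rw [hM, Matrix.transpose_sub, Matrix.transpose_smul, hSdef, hC0def]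
      rw [Matrix.transpose_add, Matrix.transpose_sub, Matrix.transpose_mul, Matrix.transpose_mul,
        Matrix.transpose_mul, Matrix.transpose_mul, hX', hY']
      module
    have key : ∀ W : Matrix (Fin n) (Fin n) ℝ,
        W.map (algebraMap ℝ ℂ) = (algebraMap ℝ ℂ).mapMatrix W := fun _ => rfl
    have eX : (algebraMap ℝ ℂ).mapMatrix X = X' := rfl
    have eY : (algebraMap ℝ ℂ).mapMatrix Y = Y' := rfl
    have hmap : (A * A).map (algebraMap ℝ ℂ) = Matrix.fromBlocks S C0 (-C0) S := by
      show (Matrix.fromBlocks X Y Y (-X) * Matrix.fromBlocks X Y Y (-X)).map (algebraMap ℝ ℂ) = _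
      rw [Matrix.fromBlocks_multiply, Matrix.fromBlocks_map]
      refine Matrix.fromBlocks_inj.mpr ⟨?_, ?_, ?_, ?_⟩ <;>
        · simp only [key, map_add, map_mul, map_neg, eX, eY, hSdef, hC0def,
            Matrix.mul_neg, Matrix.neg_mul, neg_neg]
          try abel
    clear_value S C0
    set P : Matrix (Fin n ⊕ Fin n) (Fin n ⊕ Fin n) ℂ :=
      Matrix.fromBlocks 1 1 (Complex.I • 1) (-(Complex.I • 1)) with hPdef
    set Q : Matrix (Fin n ⊕ Fin n) (Fin n ⊕ Fin n) ℂ :=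
      Matrix.fromBlocks ((2:ℂ)⁻¹ • 1) (-((Complex.I/2) • 1)) ((2:ℂ)⁻¹ • 1) ((Complex.I/2) • 1)
      with hQdef
    have hPQ : P * Q = 1 := by
      rw [hPdef, hQdef, Matrix.fromBlocks_multiply, ← Matrix.fromBlocks_one]
      refine Matrix.fromBlocks_inj.mpr ⟨?_, ?_, ?_, ?_⟩ <;>
        · simp only [smul_mul_assoc, mul_smul_comm, Matrix.neg_mul, Matrix.mul_neg, one_mul,
            mul_one, smul_smul, smul_neg, neg_smul, neg_neg]
          match_scalars
          simp [Complex.ext_iff]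
          try ring
    have hQP : Q * P = 1 := by
      rw [hPdef, hQdef, Matrix.fromBlocks_multiply, ← Matrix.fromBlocks_one]
      refine Matrix.fromBlocks_inj.mpr ⟨?_, ?_, ?_, ?_⟩ <;>
        · simp only [smul_mul_assoc, mul_smul_comm, Matrix.neg_mul, Matrix.mul_neg, one_mul,
            mul_one, smul_smul, smul_neg, neg_smul, neg_neg]
          match_scalars
          simp [Complex.ext_iff]
          try ring
    letI : Invertible P := ⟨Q, hQP, hPQ⟩
    have hinvP : (⅟P : Matrix (Fin n ⊕ Fin n) (Fin n ⊕ Fin n) ℂ) = Q := rfl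
    have hconj : P * Matrix.fromBlocks M.transpose 0 0 M * ⅟P
        = Matrix.fromBlocks S C0 (-C0) S := by
      rw [hinvP, hPdef, hQdef, Matrix.fromBlocks_multiply, Matrix.fromBlocks_multiply]
      refine Matrix.fromBlocks_inj.mpr ⟨?_, ?_, ?_, ?_⟩ <;>
        · simp only [hMT]
          simp only [hM, Matrix.mul_zero, Matrix.zero_mul, add_zero, zero_add,
            smul_mul_assoc, mul_smul_comm, Matrix.neg_mul, Matrix.mul_neg, one_mul,
            mul_one, smul_smul, smul_neg, neg_smul, neg_neg, smul_add, smul_sub]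
          match_scalars <;>
            · simp [Complex.ext_iff]
              try ring
    rw [hmap, ← hconj, my_charpoly_conj, Matrix.charpoly_fromBlocks_zero₁₂,
      my_charpoly_transpose, sq]
end
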